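/- Define sequences t_n, f_n, u_n by t_1 = f_1 = u_1 = 1 and for n ≥ 2: t_n = Σ_{i=1}^{n-1} (t_i·t_{n-i} + f_i·t_{n-i} + f_i·f_{n-i} + f_i·u_{n-i} + u_i·t_{n-i}), f_n = Σ_{i=1}^{n-1} t_i·f_{n-i}, u_n = Σ_{i=1}^{n-1} (t_i·u_{n-i} + u_i·f_{n-i} + u_i·u_{n-i}). Then for all n ≥ 1, t_n + f_n + u_n = 3^n · C_n, where C_n = (1/n)·binomial(2n-2, n-1). -/

import Mathlib

/-- `C n = (1/n) * binom(2n-2, n-1)`, the number of bracketings of `n` terms. -/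
noncomputable def catC (n : ℕ) : ℚ := (Nat.choose (2 * n - 2) (n - 1) : ℚ) / n

lemma catC_eq_catalan (n : ℕ) (hn : 1 ≤ n) : catC n = (catalan (n - 1) : ℚ) := by
  obtain ⟨m, rfl⟩ := Nat.exists_eq_add_of_le hn
  have h : 2 * (1 + m) - 2 = 2 * m := by omega
  have h2 : 1 + m - 1 = m := by omega
  rw [catC, h, h2]
  have := succ_mul_catalan_eq_centralBinom m
  have hc : ((m + 1 : ℕ) : ℚ) * (catalan m : ℚ) = (Nat.centralBinom m : ℚ) := by
    exact_mod_cast congrArg (Nat.cast : ℕ → ℚ) this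
  rw [Nat.centralBinom] at hc
  field_simp
  push_cast at hc ⊢
  linarith [hc]

theorem t_add_f_add_u_eq (t f u : ℕ → ℚ)
    (ht1 : t 1 = 1) (hf1 : f 1 = 1) (hu1 : u 1 = 1)
    (ht : ∀ n : ℕ, 2 ≤ n → t n = ∑ i ∈ Finset.Icc 1 (n - 1),
      (t i * t (n - i) + f i * t (n - i) + f i * f (n - i) +
        f i * u (n - i) + u i * t (n - i)))
    (hf : ∀ n : ℕ, 2 ≤ n → f n = ∑ i ∈ Finset.Icc 1 (n - 1), t i * f (n - i))
    (hu : ∀ n : ℕ, 2 ≤ n → u n = ∑ i ∈ Finset.Icc 1 (n - 1),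
      (t i * u (n - i) + u i * f (n - i) + u i * u (n - i))) :
    ∀ n : ℕ, 1 ≤ n → t n + f n + u n = (3 : ℚ) ^ n * catC n := by
  -- reduce to showing s n = 3^n * catalan (n-1)
  suffices H : ∀ n : ℕ, 1 ≤ n → t n + f n + u n = (3 : ℚ) ^ n * (catalan (n - 1) : ℚ) by
    intro n hn; rw [catC_eq_catalan n hn]; exact H n hn
  intro n
  induction n using Nat.strong_induction_on with
  | _ n ih =>
    intro hn
    rcases eq_or_lt_of_le hn with h1 | h2
    · rw [← h1, ht1, hf1, hu1]; norm_num [catalan]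
    · have hn2 : 2 ≤ n := h2
      rw [ht n hn2, hf n hn2, hu n hn2, ← Finset.sum_add_distrib, ← Finset.sum_add_distrib]
      have key : ∀ i ∈ Finset.Icc 1 (n - 1),
          (t i * t (n - i) + f i * t (n - i) + f i * f (n - i) + f i * u (n - i) +
            u i * t (n - i)) + t i * f (n - i) +
            (t i * u (n - i) + u i * f (n - i) + u i * u (n - i)) =
          (3 : ℚ) ^ n * ((catalan (i - 1) : ℚ) * (catalan (n - i - 1) : ℚ)) := by
        intro i hi
        simp only [Finset.mem_Icc] at hi
        have h1 : t i + f i + u i = (3 : ℚ) ^ i * (catalan (i - 1) : ℚ) :=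
          ih i (by omega) hi.1
        have h2 : t (n - i) + f (n - i) + u (n - i) =
            (3 : ℚ) ^ (n - i) * (catalan (n - i - 1) : ℚ) :=
          ih (n - i) (by omega) (by omega)
        have hpow : (3 : ℚ) ^ i * (3 : ℚ) ^ (n - i) = (3 : ℚ) ^ n := by
          rw [← pow_add]; congr 1; omega
        calc _ = (t i + f i + u i) * (t (n - i) + f (n - i) + u (n - i)) := by ring
          _ = _ := by rw [h1, h2]; rw [← hpow]; ring
      rw [Finset.sum_congr rfl key, ← Finset.mul_sum]
      congr 1
      -- ∑_{i∈Icc 1 (n-1)} catalan(i-1)*catalan(n-i-1) = catalan (n-1)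
      obtain ⟨m, rfl⟩ : ∃ m, n = m + 2 := ⟨n - 2, by omega⟩
      have : (catalan (m + 2 - 1) : ℚ) = ((catalan (m + 1) : ℕ) : ℚ) := by norm_num
      rw [this, catalan_succ']
      push_cast
      rw [Finset.Nat.sum_antidiagonal_eq_sum_range_succ
        (fun x y => ((catalan x : ℚ) * (catalan y : ℚ))) m]
      rw [show Finset.Icc 1 (m + 1) = Finset.map ⟨fun j => j + 1, add_left_injective 1⟩
        (Finset.range (m + 1)) from ?_]
      · rw [Finset.sum_map]
        apply Finset.sum_congr rfl
        intro j hj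
        simp only [Finset.mem_range] at hj
        simp only [Function.Embedding.coeFn_mk]
        have e1 : j + 1 - 1 = j := by omega
        have e2 : m + 2 - (j + 1) - 1 = m - j := by omega
        rw [e1, e2]
      · ext x
        simp only [Finset.mem_Icc, Finset.mem_map, Finset.mem_range,
          Function.Embedding.coeFn_mk]
        constructor
        · rintro ⟨h1, h2⟩; exact ⟨x - 1, by omega, by omega⟩
        · rintro ⟨j, hj, rfl⟩; omega
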